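/- Let H ⊆ 2^{[n]} be a shifted 3-wise t-intersecting family with H ⊄ F_0^t, let h = min{i : |H ∩ [t+i]| ≥ t for all H ∈ H}, and for 0 ≤ i ≤ h define T_i = {H ∩ [t+h, n] : H ∈ H, [t+h−1] \ H = [t+h−i, t+h−1]} ⊆ 2^{[t+h,n]}. Then T_i is 2-wise (2i+1)-intersecting for every 0 ≤ i ≤ h. -/

import Mathlib

open Finset

/-- p-biased measure of a family on ground set of size `n` (= `[n]`). -/
def mu (p : ℝ) (n : ℕ) (G : Finset (Finset ℕ)) : ℝ :=
  ∑ A ∈ G, p ^ A.card * (1 - p) ^ (n - A.card)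

/-- p-biased measure of a family on an arbitrary finite ground set `X`. -/
def muOn (p : ℝ) (X : Finset ℕ) (G : Finset (Finset ℕ)) : ℝ :=
  ∑ A ∈ G, p ^ A.card * (1 - p) ^ (X.card - A.card)

/-- `F_0^t = {F ⊆ [n] : [t] ⊆ F}`. -/
def F0 (n t : ℕ) : Finset (Finset ℕ) :=
  (Finset.Icc 1 n).powerset.filter (fun F => Finset.Icc 1 t ⊆ F)

/-- `F_1^t = {F ⊆ [n] : |F ∩ [t+3]| ≥ t+2}`. -/
def F1 (n t : ℕ) : Finset (Finset ℕ) :=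
  (Finset.Icc 1 n).powerset.filter (fun F => t + 2 ≤ (F ∩ Finset.Icc 1 (t + 3)).card)

/-- `F_2^t = {F ⊆ [n] : |F ∩ [t+6]| ≥ t+4}`. -/
def F2 (n t : ℕ) : Finset (Finset ℕ) :=
  (Finset.Icc 1 n).powerset.filter (fun F => t + 4 ≤ (F ∩ Finset.Icc 1 (t + 6)).card)

/-- `p_0(t) = 2/(√(4t+9) − 1)`. -/
noncomputable def p0 (t : ℕ) : ℝ := 2 / (Real.sqrt (4 * t + 9) - 1)

/-- The family is `r`-wise `t`-intersecting: any `r` members (with repetition)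
intersect in at least `t` elements. -/
def RWise (r t : ℕ) (G : Finset (Finset ℕ)) : Prop :=
  ∀ f : Fin r → Finset ℕ, (∀ k, f k ∈ G) → t ≤ (⋂ k, (f k : Set ℕ)).ncard

/-- The shift `s_{i,j}` of a single set `A`, relative to the family `G`. -/
def shiftSet (i j : ℕ) (G : Finset (Finset ℕ)) (A : Finset ℕ) : Finset ℕ :=
  if A ∩ {i, j} = {j} ∧ (A.erase j ∪ {i}) ∉ G then A.erase j ∪ {i} else A

/-- The shifting operation `σ_{i,j}` applied to a family. -/
def shift (i j : ℕ) (G : Finset (Finset ℕ)) : Finset (Finset ℕ) :=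
  G.image (shiftSet i j G)

/-- `G` and `H` are isomorphic as families on ground set `[n]`:
`H` is the image of `G` under a permutation preserving `[n]`. -/
def Iso (n : ℕ) (G H : Finset (Finset ℕ)) : Prop :=
  ∃ τ : Equiv.Perm ℕ, (∀ x, x ∈ Finset.Icc 1 n ↔ τ x ∈ Finset.Icc 1 n) ∧
    H = G.image (fun A => A.image τ)

/-- `G` is `(3,t)`-maximal on `[n]`. -/
def Max3 (n t : ℕ) (G : Finset (Finset ℕ)) : Prop :=
  (∀ A ∈ G, A ⊆ Finset.Icc 1 n) ∧ RWise 3 t G ∧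
    ∀ F : Finset ℕ, F ⊆ Finset.Icc 1 n → F ∉ G → ¬ RWise 3 t (insert F G)

/-- `G` is shifted on `[n]`. -/
def Shifted (n : ℕ) (G : Finset (Finset ℕ)) : Prop :=
  ∀ i j : ℕ, 1 ≤ i → i < j → j ≤ n → shift i j G = G

/-- One shifting step. -/
def ShiftStep (n : ℕ) (G H : Finset (Finset ℕ)) : Prop :=
  ∃ i j : ℕ, 1 ≤ i ∧ i ≤ n ∧ 1 ≤ j ∧ j ≤ n ∧ H = shift i j G


lemma mem_shifted {n : ℕ} {G : Finset (Finset ℕ)} (hs : Shifted n G)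
    {A : Finset ℕ} (hA : A ∈ G) {a b : ℕ} (h1 : 1 ≤ a) (hab : a < b) (hbn : b ≤ n)
    (hbA : b ∈ A) (haA : a ∉ A) : A.erase b ∪ {a} ∈ G := by
  by_cases hB : A.erase b ∪ {a} ∈ G
  · exact hB
  · have hsh := hs a b h1 hab hbn
    have hcond : A ∩ ({a, b} : Finset ℕ) = {b} := by
      ext x
      simp only [Finset.mem_inter, Finset.mem_insert, Finset.mem_singleton]
      constructor
      · rintro ⟨hx, rfl | rfl⟩
        · exact absurd hx haA
        · rfl
      · rintro rfl; exact ⟨hbA, Or.inr rfl⟩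
    have heq : shiftSet a b G A = A.erase b ∪ {a} := by
      rw [shiftSet, if_pos ⟨hcond, hB⟩]
    have : A.erase b ∪ {a} ∈ shift a b G := by
      rw [← heq]; exact Finset.mem_image_of_mem _ hA
    rwa [hsh] at this

lemma shift_many {n : ℕ} {G : Finset (Finset ℕ)} (hs : Shifted n G) :
    ∀ (m : ℕ) (S T A : Finset ℕ), S.card = m → A ∈ G → S ⊆ A → Disjoint T A →
      S.card = T.card → (∀ s ∈ S, s ≤ n) → (∀ a ∈ T, 1 ≤ a) →
      (∀ a ∈ T, ∀ s ∈ S, a < s) → (A \ S) ∪ T ∈ G := by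
  intro m
  induction m with
  | zero =>
    intro S T A hScard hA hSA hTA hST _ _ _
    have hS : S = ∅ := Finset.card_eq_zero.1 hScard
    have hT : T = ∅ := Finset.card_eq_zero.1 (hST ▸ hScard)
    simpa [hS, hT] using hA
  | succ m ih =>
    intro S T A hScard hA hSA hTA hST hSn hT1 hTS
    obtain ⟨s, hsS⟩ := Finset.card_pos.1 (by omega : 0 < S.card)
    obtain ⟨a, haT⟩ := Finset.card_pos.1 (by rw [← hST]; omega : 0 < T.card)
    have hsA : s ∈ A := hSA hsS
    have haA : a ∉ A := fun hx => (Finset.disjoint_left.1 hTA haT) hx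
    have has : a < s := hTS a haT s hsS
    have hsn : s ≤ n := hSn s hsS
    have ha1 : 1 ≤ a := hT1 a haT
    have hA1 : A.erase s ∪ {a} ∈ G := mem_shifted hs hA ha1 has hsn hsA haA
    have hsT : s ∉ T := fun hx => lt_irrefl s (hTS s hx s hsS)
    have haS : a ∉ S := fun hx => haA (hSA hx)
    have key : ((A.erase s ∪ {a}) \ S.erase s) ∪ T.erase a = (A \ S) ∪ T := by
      ext x
      simp only [Finset.mem_union, Finset.mem_sdiff, Finset.mem_erase,
        Finset.mem_singleton]
      constructor
      · intro hx
        rcases hx with ⟨hx2, hx3⟩ | ⟨hxa, hxT⟩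
        · rcases hx2 with ⟨hxs, hxA⟩ | rfl
          · exact Or.inl ⟨hxA, fun hx => hx3 ⟨hxs, hx⟩⟩
          · exact Or.inr haT
        · exact Or.inr hxT
      · intro hx
        rcases hx with ⟨hxA, hxS⟩ | hxT
        · refine Or.inl ⟨Or.inl ⟨fun hh => hxS (hh ▸ hsS), hxA⟩, ?_⟩
          rintro ⟨_, hx⟩; exact hxS hx
        · by_cases hx : x = a
          · subst hx; exact Or.inl ⟨Or.inr rfl, fun hy => haS hy.2⟩
          · exact Or.inr ⟨hx, hxT⟩
    rw [← key]
    refine ih (S.erase s) (T.erase a) (A.erase s ∪ {a}) ?_ hA1 ?_ ?_ ?_ ?_ ?_ ?_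
    · rw [Finset.card_erase_of_mem hsS]; omega
    · intro x hx
      have hx' := Finset.mem_erase.1 hx
      exact Finset.mem_union_left _ (Finset.mem_erase.2 ⟨hx'.1, hSA hx'.2⟩)
    · rw [Finset.disjoint_left]
      intro x hx hx'
      have hxT := Finset.mem_erase.1 hx
      rcases Finset.mem_union.1 hx' with hx2 | hx2
      · exact (Finset.disjoint_left.1 hTA hxT.2) (Finset.mem_of_mem_erase hx2)
      · exact hxT.1 (Finset.mem_singleton.1 hx2)
    · rw [Finset.card_erase_of_mem hsS, Finset.card_erase_of_mem haT, hST]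
    · intro x hx; exact hSn x (Finset.mem_of_mem_erase hx)
    · intro x hx; exact hT1 x (Finset.mem_of_mem_erase hx)
    · intro x hx y hy
      exact hTS x (Finset.mem_of_mem_erase hx) y (Finset.mem_of_mem_erase hy)

theorem stmt_14 (n t h : ℕ) (H : Finset (Finset ℕ)) (hH : ∀ A ∈ H, A ⊆ Finset.Icc 1 n)
    (hshift : Shifted n H) (hint : RWise 3 t H) (hnot : ¬ H ⊆ F0 n t)
    (hh : ∀ A ∈ H, t ≤ (A ∩ Finset.Icc 1 (t + h)).card)
    (hh' : ∀ i < h, ∃ A ∈ H, (A ∩ Finset.Icc 1 (t + i)).card < t) :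
    ∀ i ≤ h, RWise 2 (2 * i + 1)
      ((H.filter (fun A => Finset.Icc 1 (t + h - 1) \ A =
          Finset.Icc (t + h - i) (t + h - 1))).image
        (fun A => A ∩ Finset.Icc (t + h) n)) := by 
  -- First, rule out `t = 0` or `h = 0` (they contradict `hnot`).
  have habs : 1 ≤ t ∧ 1 ≤ h := by
    by_contra hc
    apply hnot
    intro A hA
    simp only [F0, Finset.mem_filter, Finset.mem_powerset]
    refine ⟨hH A hA, ?_⟩
    rcases Nat.eq_zero_or_pos t with ht | ht
    · simp [ht]
    · have hh0 : h = 0 := by omega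
      have h1 := hh A hA
      rw [hh0, add_zero] at h1
      have h2 : A ∩ Finset.Icc 1 t = Finset.Icc 1 t :=
        Finset.eq_of_subset_of_card_le Finset.inter_subset_right
          (by rw [Nat.card_Icc]; omega)
      rw [← h2]; exact Finset.inter_subset_left
  obtain ⟨ht1, hh1⟩ := habs
  intro i hi f hf
  obtain ⟨A, hAm, hfA⟩ := Finset.mem_image.1 (hf 0)
  obtain ⟨B, hBm, hfB⟩ := Finset.mem_image.1 (hf 1)
  obtain ⟨hAH, hAc⟩ := Finset.mem_filter.1 hAm
  obtain ⟨hBH, hBc⟩ := Finset.mem_filter.1 hBm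
  have hiI : (⋂ k, ((f k : Finset ℕ) : Set ℕ)) = ↑(f 0 ∩ f 1) := by
    ext x
    simp [Fin.forall_fin_two]
  rw [hiI, Set.ncard_coe_finset, ← hfA, ← hfB]
  set A' := A ∩ Finset.Icc (t + h) n with hA'def
  set B' := B ∩ Finset.Icc (t + h) n with hB'def
  by_contra hcon
  push_neg at hcon
  -- the witness D with small trace on [t+h-1]
  obtain ⟨D, hDH, hDc⟩ := hh' (h - 1) (by omega)
  have hDc' : (D ∩ Finset.Icc 1 (t + h - 1)).card < t := by
    have he : t + (h - 1) = t + h - 1 := by omega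
    rwa [he] at hDc
  -- choose S1 ⊆ A'∩B' of size min i |A'∩B'|, S2 the rest
  obtain ⟨S1, hS1sub, hS1card⟩ :=
    Finset.exists_subset_card_eq (s := A' ∩ B') (n := min i (A' ∩ B').card) (min_le_right _ _)
  set S2 := (A' ∩ B') \ S1 with hS2def
  have hS2sub : S2 ⊆ A' ∩ B' := Finset.sdiff_subset
  have hS2card : S2.card ≤ i := by
    rw [hS2def, Finset.card_sdiff_of_subset hS1sub, hS1card]; omega
  have hS1card' : S1.card ≤ i := by rw [hS1card]; omega
  have hIcard : (Finset.Icc (t + h - i) (t + h - 1)).card = i := by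
    rw [Nat.card_Icc]; omega
  obtain ⟨T1, hT1sub, hT1card⟩ :=
    Finset.exists_subset_card_eq (s := Finset.Icc (t + h - i) (t + h - 1)) (n := S1.card)
      (by rw [hIcard]; exact hS1card')
  obtain ⟨T2, hT2sub, hT2card⟩ :=
    Finset.exists_subset_card_eq (s := Finset.Icc (t + h - i) (t + h - 1)) (n := S2.card)
      (by rw [hIcard]; exact hS2card)
  -- the "free slots" interval is disjoint from A and from B
  have hAdisj : Disjoint (Finset.Icc (t + h - i) (t + h - 1)) A := by
    rw [Finset.disjoint_left]
    intro x hx hxA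
    rw [← hAc] at hx
    exact (Finset.mem_sdiff.1 hx).2 hxA
  have hBdisj : Disjoint (Finset.Icc (t + h - i) (t + h - 1)) B := by
    rw [Finset.disjoint_left]
    intro x hx hxB
    rw [← hBc] at hx
    exact (Finset.mem_sdiff.1 hx).2 hxB
  have hS1A : S1 ⊆ A :=
    hS1sub.trans (Finset.inter_subset_left.trans Finset.inter_subset_left)
  have hS2B : S2 ⊆ B :=
    hS2sub.trans (Finset.inter_subset_right.trans Finset.inter_subset_left)
  have hS1Icc : ∀ x ∈ S1, t + h ≤ x ∧ x ≤ n := by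
    intro x hx
    exact Finset.mem_Icc.1
      (Finset.inter_subset_right ((hS1sub.trans Finset.inter_subset_left) hx))
  have hS2Icc : ∀ x ∈ S2, t + h ≤ x ∧ x ≤ n := by
    intro x hx
    exact Finset.mem_Icc.1
      (Finset.inter_subset_right ((hS2sub.trans Finset.inter_subset_left) hx))
  -- shifted sets
  have hA2 : (A \ S1) ∪ T1 ∈ H := by
    refine shift_many hshift S1.card S1 T1 A rfl hAH hS1A
      (Finset.disjoint_of_subset_left hT1sub hAdisj) hT1card.symm
      (fun x hx => (hS1Icc x hx).2)
      (fun a ha => by have := Finset.mem_Icc.1 (hT1sub ha); omega)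
      (fun a ha x hx => ?_)
    have h1 := Finset.mem_Icc.1 (hT1sub ha)
    have h2 := hS1Icc x hx
    omega
  have hB2 : (B \ S2) ∪ T2 ∈ H := by
    refine shift_many hshift S2.card S2 T2 B rfl hBH hS2B
      (Finset.disjoint_of_subset_left hT2sub hBdisj) hT2card.symm
      (fun x hx => (hS2Icc x hx).2)
      (fun a ha => by have := Finset.mem_Icc.1 (hT2sub ha); omega)
      (fun a ha x hx => ?_)
    have h1 := Finset.mem_Icc.1 (hT2sub ha)
    have h2 := hS2Icc x hx
    omega
  -- traces of the shifted sets on [t+h, n]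
  have htrA : ((A \ S1) ∪ T1) ∩ Finset.Icc (t + h) n = A' \ S1 := by
    ext x
    simp only [Finset.mem_inter, Finset.mem_union, Finset.mem_sdiff, Finset.mem_Icc,
      hA'def]
    constructor
    · rintro ⟨hx | hx, hb⟩
      · exact ⟨⟨hx.1, hb⟩, hx.2⟩
      · have := Finset.mem_Icc.1 (hT1sub hx); omega
    · rintro ⟨⟨hxA, hb1, hb2⟩, hs⟩
      exact ⟨Or.inl ⟨hxA, hs⟩, hb1, hb2⟩
  have htrB : ((B \ S2) ∪ T2) ∩ Finset.Icc (t + h) n = B' \ S2 := by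
    ext x
    simp only [Finset.mem_inter, Finset.mem_union, Finset.mem_sdiff, Finset.mem_Icc,
      hB'def]
    constructor
    · rintro ⟨hx | hx, hb⟩
      · exact ⟨⟨hx.1, hb⟩, hx.2⟩
      · have := Finset.mem_Icc.1 (hT2sub hx); omega
    · rintro ⟨⟨hxB, hb1, hb2⟩, hs⟩
      exact ⟨Or.inl ⟨hxB, hs⟩, hb1, hb2⟩
  -- apply 3-wise t-intersection
  have h3 := hint ![(A \ S1) ∪ T1, (B \ S2) ∪ T2, D]
    (by intro k; fin_cases k <;> simpa using (by first | exact hA2 | exact hB2 | exact hDH))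
  have hiI3 : (⋂ k, ((![(A \ S1) ∪ T1, (B \ S2) ∪ T2, D] k : Finset ℕ) : Set ℕ))
      = ↑((((A \ S1) ∪ T1) ∩ ((B \ S2) ∪ T2)) ∩ D) := by
    ext x
    simp [Fin.forall_fin_succ, and_assoc]
  rw [hiI3, Set.ncard_coe_finset] at h3
  have hsub : (((A \ S1) ∪ T1) ∩ ((B \ S2) ∪ T2)) ∩ D ⊆
      D ∩ Finset.Icc 1 (t + h - 1) := by
    intro x hx
    simp only [Finset.mem_inter] at hx
    obtain ⟨⟨hx1, hx2⟩, hx3⟩ := hx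
    have hxn := Finset.mem_Icc.1 (hH D hDH hx3)
    by_cases hge : t + h ≤ x
    · exfalso
      have hxA : x ∈ A' \ S1 := by
        rw [← htrA]
        exact Finset.mem_inter.2 ⟨hx1, Finset.mem_Icc.2 ⟨hge, hxn.2⟩⟩
      have hxB : x ∈ B' \ S2 := by
        rw [← htrB]
        exact Finset.mem_inter.2 ⟨hx2, Finset.mem_Icc.2 ⟨hge, hxn.2⟩⟩
      have hmem : x ∈ A' ∩ B' :=
        Finset.mem_inter.2 ⟨(Finset.mem_sdiff.1 hxA).1, (Finset.mem_sdiff.1 hxB).1⟩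
      exact (Finset.mem_sdiff.1 hxB).2
        (Finset.mem_sdiff.2 ⟨hmem, (Finset.mem_sdiff.1 hxA).2⟩)
    · exact Finset.mem_inter.2 ⟨hx3, Finset.mem_Icc.2 ⟨hxn.1, by omega⟩⟩
  have hfin := Finset.card_le_card hsub
  omega
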